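/- Let μ be a full non-atomic Borel measure on a locally compact Cantor set X with μ(𝔐_μ) = 0. If a compact open set U admits a finite partition into compact open subsets each of which is good for μ, then U is good for μ. -/

import Mathlib

open MeasureTheory Topology ENNReal TopologicalSpace

/-- A set is compact open. -/
def IsCompactOpen {X : Type*} [TopologicalSpace X] (U : Set X) : Prop :=
  IsCompact U ∧ IsOpen U

/-- The defective set of a measure: points all of whose compact open
neighbourhoods have infinite measure. -/
def DefectiveSet {X : Type*} [TopologicalSpace X] [MeasurableSpace X]
    (μ : Measure X) : Set X :=
  {x | ∀ U : Set X, IsCompactOpen U → x ∈ U → μ U = ⊤}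

/-- A compact open set `V` is good for `μ`. -/
def GoodSet {X : Type*} [TopologicalSpace X] [MeasurableSpace X]
    (μ : Measure X) (V : Set X) : Prop :=
  ∀ U : Set X, IsCompactOpen U → μ U < μ V →
    ∃ W : Set X, W ⊆ V ∧ IsCompactOpen W ∧ μ W = μ U

/-- The measure `μ` is good: every compact open set is good for `μ`. -/
def Good {X : Type*} [TopologicalSpace X] [MeasurableSpace X]
    (μ : Measure X) : Prop :=
  ∀ V : Set X, IsCompactOpen V → GoodSet μ V

/-- The restriction of `μ` to the (open) subset `A` is good: compact open
subsets of the subspace `A` are exactly compact open subsets of `X` contained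
in `A`. -/
def GoodOn {X : Type*} [TopologicalSpace X] [MeasurableSpace X]
    (μ : Measure X) (A : Set X) : Prop :=
  ∀ U V : Set X, IsCompactOpen U → U ⊆ A → IsCompactOpen V → V ⊆ A → μ U < μ V →
    ∃ W : Set X, W ⊆ V ∧ IsCompactOpen W ∧ μ W = μ U

/-- The compact open values set, as a set of extended nonnegative reals. -/
def SE {X : Type*} [TopologicalSpace X] [MeasurableSpace X]
    (μ : Measure X) : Set ℝ≥0∞ :=
  {v | v ≠ ⊤ ∧ ∃ U : Set X, IsCompactOpen U ∧ μ U = v}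

/-- The compact open values set of the restriction of `μ` to `A`. -/
def SEOn {X : Type*} [TopologicalSpace X] [MeasurableSpace X]
    (μ : Measure X) (A : Set X) : Set ℝ≥0∞ :=
  {v | v ≠ ⊤ ∧ ∃ U : Set X, IsCompactOpen U ∧ U ⊆ A ∧ μ U = v}

/-- The compact open values set, as a set of reals. -/
def Sreal {X : Type*} [TopologicalSpace X] [MeasurableSpace X]
    (μ : Measure X) : Set ℝ :=
  {r | ∃ U : Set X, IsCompactOpen U ∧ μ U ≠ ⊤ ∧ (μ U).toReal = r}

/-- The compact open values set of the restriction of `μ` to `A`, as reals. -/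
def SrealOn {X : Type*} [TopologicalSpace X] [MeasurableSpace X]
    (μ : Measure X) (A : Set X) : Set ℝ :=
  {r | ∃ U : Set X, IsCompactOpen U ∧ U ⊆ A ∧ μ U ≠ ⊤ ∧ (μ U).toReal = r}

/-- A measure is full if every non-empty open set has positive measure. -/
def IsFull {X : Type*} [TopologicalSpace X] [MeasurableSpace X]
    (μ : Measure X) : Prop :=
  ∀ U : Set X, IsOpen U → U.Nonempty → 0 < μ U

/-- A measure is non-atomic if every singleton has measure zero. -/
def NonAtomic {X : Type*} [MeasurableSpace X] (μ : Measure X) : Prop :=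
  ∀ x : X, μ {x} = 0

/-- The space has a countable basis consisting of compact open sets. -/
def HasCompactOpenBasis (X : Type*) [TopologicalSpace X] : Prop :=
  ∃ B : Set (Set X), B.Countable ∧ TopologicalSpace.IsTopologicalBasis B ∧
    ∀ U ∈ B, IsCompact U ∧ IsOpen U

/-- The space has no isolated points. -/
def NoIsolatedPoints (X : Type*) [TopologicalSpace X] : Prop :=
  ∀ x : X, ¬ IsOpen ({x} : Set X)


section Aux

variable {X : Type*} [TopologicalSpace X] [MeasurableSpace X] [BorelSpace X]
  [MetrizableSpace X]

lemma exists_small_clopen_nbhd (hB : HasCompactOpenBasis X)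
    (μ : Measure X) (hna : NonAtomic μ) {A : Set X} (hA : IsCompactOpen A) (hAfin : μ A ≠ ⊤)
    {ε : ℝ≥0∞} (hε : 0 < ε) {x : X} (hx : x ∈ A) :
    ∃ N : Set X, IsCompactOpen N ∧ x ∈ N ∧ N ⊆ A ∧ μ N < ε := by
  letI : MetricSpace X := TopologicalSpace.metrizableSpaceMetric X
  obtain ⟨Bb, -, hbasis, hBco⟩ := hB
  have hC : ∀ n : ℕ, ∃ C ∈ Bb, x ∈ C ∧ C ⊆ Metric.ball x (1 / (n + 1)) ∩ A := by
    intro n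
    exact hbasis.exists_subset_of_mem_open
      ⟨Metric.mem_ball_self (by positivity), hx⟩ (Metric.isOpen_ball.inter hA.2)
  choose C hCB hxC hCsub using hC
  set D : ℕ → Set X := fun n => ⋂ i ∈ Finset.range (n + 1), C i with hD
  have hDopen : ∀ n, IsOpen (D n) := fun n =>
    isOpen_biInter_finset fun i _ => (hBco _ (hCB i)).2
  have hDcl : ∀ n, IsClosed (D n) := fun n =>
    isClosed_biInter fun i _ => (hBco _ (hCB i)).1.isClosed
  have hDsub : ∀ n i, i ≤ n → D n ⊆ C i := by
    intro n i hi
    exact Set.biInter_subset_of_mem (Finset.mem_range.2 (Nat.lt_succ_of_le hi))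
  have hDcpt : ∀ n, IsCompact (D n) :=
    fun n => (hBco _ (hCB 0)).1.of_isClosed_subset (hDcl n) (hDsub n 0 (Nat.zero_le n))
  have hDanti : Antitone D := by
    intro m n hmn
    exact Set.biInter_subset_biInter_left (fun i hi =>
      Finset.mem_range.2 (lt_of_lt_of_le (Finset.mem_range.1 hi) (by omega)))
  have hDA : ∀ n, D n ⊆ A := fun n =>
    (hDsub n 0 (Nat.zero_le n)).trans ((hCsub 0).trans Set.inter_subset_right)
  have hiInter : (⋂ n, D n) ⊆ {x} := by
    intro y hy
    simp only [Set.mem_iInter] at hy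
    have hdist : ∀ n : ℕ, dist y x < 1 / (n + 1) := by
      intro n
      have : y ∈ Metric.ball x (1 / (n + 1)) :=
        ((hCsub n).trans Set.inter_subset_left) (hDsub n n le_rfl (hy n))
      simpa [Metric.mem_ball] using this
    have : dist y x ≤ 0 := by
      by_contra h
      push_neg at h
      obtain ⟨n, hn⟩ := exists_nat_one_div_lt h
      exact absurd (hdist n) (not_lt.2 (by exact_mod_cast hn.le))
    simp only [Set.mem_singleton_iff]
    exact dist_le_zero.1 this
  have hμ0 : μ (⋂ n, D n) = 0 :=
    le_antisymm ((measure_mono hiInter).trans (hna x).le) zero_le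
  have htend := tendsto_measure_iInter_atTop (μ := μ)
    (fun n => ((hDopen n).measurableSet).nullMeasurableSet) hDanti
    ⟨0, fun h => hAfin (top_le_iff.1 (h ▸ measure_mono (hDA 0)))⟩
  rw [hμ0] at htend
  obtain ⟨n, hn⟩ := (htend.eventually (gt_mem_nhds hε)).exists
  exact ⟨D n, ⟨hDcpt n, hDopen n⟩, Set.mem_iInter₂.2 fun i _ => hxC i, hDA n, hn⟩

lemma exists_clopen_approx (hB : HasCompactOpenBasis X)
    (μ : Measure X) (hna : NonAtomic μ) {A : Set X} (hA : IsCompactOpen A) (hAfin : μ A ≠ ⊤)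
    {t ε : ℝ≥0∞} (ht : t < μ A) (hε : 0 < ε) :
    ∃ B : Set X, B ⊆ A ∧ IsCompactOpen B ∧ t < μ B ∧ μ B < t + ε := by
  classical
  have hchoice : ∀ x : A, ∃ N : Set X, IsCompactOpen N ∧ (x : X) ∈ N ∧ N ⊆ A ∧ μ N < ε :=
    fun x => exists_small_clopen_nbhd hB μ hna hA hAfin hε x.2
  choose N hNc hNx hNA hNε using hchoice
  have hcover : A ⊆ ⋃ x : A, N x := fun y hy => Set.mem_iUnion.2 ⟨⟨y, hy⟩, hNx ⟨y, hy⟩⟩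
  obtain ⟨s, hs⟩ := hA.1.elim_finite_subcover N (fun x => (hNc x).2) hcover
  set L : List (Set X) := s.toList.map N with hL
  have hLmem : ∀ i : ℕ, IsCompactOpen (L.getD i ∅) ∧ L.getD i ∅ ⊆ A ∧ μ (L.getD i ∅) < ε := by
    intro i
    by_cases h : i < L.length
    · rw [List.getD_eq_getElem L ∅ h]
      have hmem : L[i] ∈ L := List.getElem_mem h
      obtain ⟨x, -, hx⟩ := List.mem_map.1 hmem
      rw [← hx]
      exact ⟨hNc x, hNA x, hNε x⟩
    · rw [List.getD_eq_default L ∅ (le_of_not_gt h)]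
      exact ⟨⟨isCompact_empty, isOpen_empty⟩, Set.empty_subset _, by simpa using hε⟩
  set Q : ℕ → Set X := fun m => ⋃ i ∈ Finset.range m, L.getD i ∅ with hQ
  have hQc : ∀ m, IsCompactOpen (Q m) := by
    intro m
    exact ⟨(Finset.range m).finite_toSet.isCompact_biUnion fun i _ => (hLmem i).1.1,
      isOpen_biUnion fun i _ => (hLmem i).1.2⟩
  have hQA : ∀ m, Q m ⊆ A := fun m => Set.iUnion₂_subset fun i _ => (hLmem i).2.1
  have hQsucc : ∀ m, Q (m + 1) = L.getD m ∅ ∪ Q m := by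
    intro m
    rw [hQ]
    simp only [Finset.range_add_one, Finset.set_biUnion_insert]
  have hQmono : Monotone Q := by
    intro a b hab
    exact Set.biUnion_subset_biUnion_left
      (fun i hi => Finset.mem_range.2 (lt_of_lt_of_le (Finset.mem_range.1 hi) hab))
  have hAQ : A ⊆ Q L.length := by
    intro y hy
    obtain ⟨x, hxs, hyx⟩ := Set.mem_iUnion₂.1 (hs hy)
    have hmem : N x ∈ L := List.mem_map.2 ⟨x, Finset.mem_toList.2 hxs, rfl⟩
    obtain ⟨i, hi, hgei⟩ := List.mem_iff_getElem.1 hmem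
    refine Set.mem_biUnion (Finset.mem_range.2 hi) ?_
    rw [List.getD_eq_getElem L ∅ hi, hgei]
    exact hyx
  have hQlen : μ (Q L.length) = μ A :=
    le_antisymm (measure_mono (hQA _)) (measure_mono hAQ)
  have hex : ∃ m, t < μ (Q m) := ⟨L.length, hQlen ▸ ht⟩
  set m := Nat.find hex with hm
  have hmlt : t < μ (Q m) := Nat.find_spec hex
  have hm0 : m ≠ 0 := by
    intro h
    rw [h] at hmlt
    simp only [hQ, Finset.range_zero, Set.mem_empty_iff_false, Set.iUnion_of_empty,
      Set.iUnion_empty, measure_empty] at hmlt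
    exact absurd hmlt (by simp)
  obtain ⟨k, hk⟩ := Nat.exists_eq_succ_of_ne_zero hm0
  have hklt : ¬ t < μ (Q k) := Nat.find_min hex (by omega)
  push_neg at hklt
  have htne : t ≠ ⊤ := ht.ne_top
  have hbound : μ (Q m) < t + ε := by
    calc μ (Q m) = μ (L.getD k ∅ ∪ Q k) := by rw [hk, hQsucc]
    _ ≤ μ (Q k) + μ (L.getD k ∅) := by rw [add_comm]; exact measure_union_le _ _
    _ < t + ε := ENNReal.add_lt_add_of_le_of_lt (hklt.trans_lt (lt_top_iff_ne_top.2 htne)).ne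
        hklt (hLmem k).2.2
  exact ⟨Q m, hQA m, hQc m, hmlt, hbound⟩

lemma goodSet_union (hB : HasCompactOpenBasis X)
    (μ : Measure X) (hna : NonAtomic μ) {V₁ V₂ : Set X}
    (h1c : IsCompactOpen V₁) (h2c : IsCompactOpen V₂)
    (h1 : GoodSet μ V₁) (h2 : GoodSet μ V₂) (hd : Disjoint V₁ V₂) :
    GoodSet μ (V₁ ∪ V₂) := by
  intro A hA hAlt
  have hsum : μ (V₁ ∪ V₂) = μ V₁ + μ V₂ := measure_union hd h2c.2.measurableSet
  rw [hsum] at hAlt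
  by_cases hc1 : μ A < μ V₁
  · obtain ⟨W, hW1, hW2, hW3⟩ := h1 A hA hc1
    exact ⟨W, hW1.trans Set.subset_union_left, hW2, hW3⟩
  by_cases hc2 : μ A < μ V₂
  · obtain ⟨W, hW1, hW2, hW3⟩ := h2 A hA hc2
    exact ⟨W, hW1.trans Set.subset_union_right, hW2, hW3⟩
  push_neg at hc1 hc2
  have hAfin : μ A ≠ ⊤ := hAlt.ne_top
  have hV1fin : μ V₁ ≠ ⊤ := fun h => hAfin (top_le_iff.1 (h ▸ hc1))
  have hV2fin : μ V₂ ≠ ⊤ := fun h => hAfin (top_le_iff.1 (h ▸ hc2))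
  have hV2pos : 0 < μ V₂ := by
    rcases eq_or_lt_of_le (zero_le : 0 ≤ μ V₂) with h | h
    · exact absurd hAlt (by rw [← h, add_zero]; exact not_lt.2 hc1)
    · exact h
  have hV1pos : 0 < μ V₁ := by
    rcases eq_or_lt_of_le (zero_le : 0 ≤ μ V₁) with h | h
    · exact absurd hAlt (by rw [← h, zero_add]; exact not_lt.2 hc2)
    · exact h
  set t : ℝ≥0∞ := μ A - μ V₁ with htdef
  have hAp : μ A ≠ 0 := (lt_of_lt_of_le hV1pos hc1).ne'
  have ht : t < μ A := ENNReal.sub_lt_self hAfin hAp hV1pos.ne'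
  have htV2 : t < μ V₂ := by
    rw [htdef, ENNReal.sub_lt_iff_lt_right hV1fin hc1, add_comm]
    exact hAlt
  have hεpos : 0 < μ V₂ - t := tsub_pos_of_lt htV2
  obtain ⟨B, hBA, hBc, hBt, hBlt⟩ := exists_clopen_approx hB μ hna hA hAfin ht hεpos
  rw [add_tsub_cancel_of_le htV2.le] at hBlt
  obtain ⟨W₂, hW₂V, hW₂c, hW₂μ⟩ := h2 B hBc hBlt
  have hABc : IsCompactOpen (A \ B) := ⟨hA.1.diff hBc.2, hA.2.sdiff hBc.1.isClosed⟩
  have hBfin : μ B ≠ ⊤ := hBlt.ne_top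
  have hμdiff : μ (A \ B) = μ A - μ B :=
    measure_diff hBA hBc.2.measurableSet.nullMeasurableSet hBfin
  have hdlt : μ (A \ B) < μ V₁ := by
    rw [hμdiff, ENNReal.sub_lt_iff_lt_right hBfin (measure_mono hBA)]
    rw [htdef, ENNReal.sub_lt_iff_lt_right hV1fin hc1] at hBt
    rw [add_comm]
    exact hBt
  obtain ⟨W₁, hW₁V, hW₁c, hW₁μ⟩ := h1 (A \ B) hABc hdlt
  refine ⟨W₁ ∪ W₂, Set.union_subset_union hW₁V hW₂V, ⟨hW₁c.1.union hW₂c.1, hW₁c.2.union hW₂c.2⟩, ?_⟩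
  rw [measure_union (hd.mono hW₁V hW₂V) hW₂c.2.measurableSet, hW₁μ, hW₂μ, hμdiff,
    tsub_add_cancel_of_le (measure_mono hBA)]

lemma goodSet_iUnion (hB : HasCompactOpenBasis X)
    (μ : Measure X) (hna : NonAtomic μ) :
    ∀ (n : ℕ) (P : Fin n → Set X), (∀ i, IsCompactOpen (P i) ∧ GoodSet μ (P i)) →
    Pairwise (Function.onFun Disjoint P) →
    IsCompactOpen (⋃ i, P i) ∧ GoodSet μ (⋃ i, P i) := by
  intro n
  induction n with
  | zero =>
    intro P _ _
    rw [Set.iUnion_of_empty]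
    exact ⟨⟨isCompact_empty, isOpen_empty⟩, fun A hA h => absurd h (by simp)⟩
  | succ n ih =>
    intro P hP hdisj
    have key : (⋃ i, P i) = P 0 ∪ ⋃ i : Fin n, P i.succ := by
      ext x
      simp only [Set.mem_iUnion, Set.mem_union]
      constructor
      · rintro ⟨i, hi⟩
        rcases Fin.eq_zero_or_eq_succ i with h | ⟨j, rfl⟩
        · exact Or.inl (h ▸ hi)
        · exact Or.inr ⟨j, hi⟩
      · rintro (h | ⟨j, hj⟩)
        · exact ⟨0, h⟩
        · exact ⟨j.succ, hj⟩
    obtain ⟨hrc, hrg⟩ := ih (fun i => P i.succ) (fun i => hP i.succ)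
      (fun i j hij => hdisj ((Fin.succ_injective n).ne hij))
    have hd0 : Disjoint (P 0) (⋃ i : Fin n, P i.succ) :=
      Set.disjoint_iUnion_right.mpr fun i => hdisj (Fin.succ_ne_zero i).symm
    rw [key]
    exact ⟨⟨(hP 0).1.1.union hrc.1, (hP 0).1.2.union hrc.2⟩,
      goodSet_union hB μ hna (hP 0).1 hrc (hP 0).2 hrg hd0⟩

end Aux

theorem stmt11 {X : Type*} [TopologicalSpace X] [MeasurableSpace X] [BorelSpace X]
    [MetrizableSpace X] [LocallyCompactSpace X] [TotallyDisconnectedSpace X]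
    (hB : HasCompactOpenBasis X) (hni : NoIsolatedPoints X)
    (μ : Measure X) (hfull : IsFull μ) (hna : NonAtomic μ)
    (h0 : μ (DefectiveSet μ) = 0)
    (U : Set X) (hU : IsCompactOpen U) (n : ℕ) (P : Fin n → Set X)
    (hP : ∀ i, IsCompactOpen (P i) ∧ GoodSet μ (P i))
    (hdisj : Pairwise (Function.onFun Disjoint P))
    (hcover : (⋃ i, P i) = U) :
    GoodSet μ U := by
  rw [← hcover]
  exact (goodSet_iUnion hB μ hna n P hP hdisj).2
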